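/- Let μ > 0 and α ≥ 1/(2μ), and set c = 1/(2μ). Then the exact value of the integral of the unit-rate exponential density against the piecewise-linear function Z is ∫₀^∞ e^{-x} Z(x) dx = 1 − μ ( e^{-(α−c)} − e^{-(α+c)} ); equivalently, 1 − ∫₀^∞ e^{-x} Z(x) dx = μ ( e^{-α + 1/(2μ)} − e^{-α − 1/(2μ)} ). (This is the exact form of the no-CSIT throughput expression.) -/

import Mathlib

open MeasureTheory Real

noncomputable def Zfun (μ α x : ℝ) : ℝ :=
  if x < α - 1 / (2 * μ) then 1
  else if x ≤ α + 1 / (2 * μ) then 1 / 2 - μ * (x - α)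
  else 0

lemma Zfun_mem_Icc (μ α x : ℝ) (hμ : 0 < μ) : 0 ≤ Zfun μ α x ∧ Zfun μ α x ≤ 1 := by
  have hμc' : μ * (1/(2*μ)) = 1/2 := by field_simp
  unfold Zfun
  split_ifs with h1 h2
  · norm_num
  · have h1' : α - 1/(2*μ) ≤ x := not_lt.1 h1
    have t1 := mul_le_mul_of_nonneg_left (show x - α ≤ 1/(2*μ) by linarith) hμ.le
    have t2 := mul_le_mul_of_nonneg_left (show -(1/(2*μ)) ≤ x - α by linarith) hμ.le
    exact ⟨by linarith, by nlinarith⟩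
  · norm_num

set_option maxHeartbeats 1000000 in
/-- Exact value of the integral of the unit-rate exponential density against the
piecewise-linear approximation of the Q-function (exact no-CSIT throughput expression). -/
theorem stmt7 (μ α : ℝ) (hμ : 0 < μ) (hα : 1 / (2 * μ) ≤ α) :
    (∫ x in Set.Ioi (0:ℝ), Real.exp (-x) * Zfun μ α x)
        = 1 - μ * (Real.exp (-(α - 1 / (2 * μ))) - Real.exp (-(α + 1 / (2 * μ)))) ∧
      1 - (∫ x in Set.Ioi (0:ℝ), Real.exp (-x) * Zfun μ α x)
        = μ * (Real.exp (-α + 1 / (2 * μ)) - Real.exp (-α - 1 / (2 * μ))) := by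
  set c : ℝ := 1 / (2 * μ) with hc_def
  have hc : 0 < c := by positivity
  have hμc : μ * c = 1 / 2 := by
    rw [hc_def]; field_simp
  set a : ℝ := α - c with ha_def
  set b : ℝ := α + c with hb_def
  have ha0 : 0 ≤ a := by simp [ha_def]; linarith
  have hab : a ≤ b := by simp [ha_def, hb_def]; linarith
  have hb0 : 0 ≤ b := le_trans ha0 hab
  set f : ℝ → ℝ := fun x => Real.exp (-x) * Zfun μ α x with hf_def
  -- measurability
  have hmeas : Measurable f := by
    apply Measurable.mul (Real.measurable_exp.comp measurable_neg)
    unfold Zfun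
    apply Measurable.ite (measurableSet_lt measurable_id measurable_const)
      measurable_const
    apply Measurable.ite (measurableSet_le measurable_id measurable_const)
    · measurability
    · exact measurable_const
  -- f vanishes beyond b
  have hIoi : ∀ x ∈ Set.Ioi b, f x = 0 := by
    intro x hx
    simp only [Set.mem_Ioi] at hx
    have h1 : ¬ (x < α - 1/(2*μ)) := by push_neg; linarith [hc.le]
    have h2 : ¬ (x ≤ α + 1/(2*μ)) := by push_neg; exact hx
    have hz : Zfun μ α x = 0 := by unfold Zfun; rw [if_neg h1, if_neg h2]
    simp [hf_def, hz]
  -- integrability on Ioc 0 b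
  have hbound : ∀ x ∈ Set.Ioc (0:ℝ) b, ‖f x‖ ≤ 1 := by
    intro x hx
    obtain ⟨hx0, hxb⟩ := hx
    have he1 : Real.exp (-x) ≤ 1 := by
      rw [Real.exp_le_one_iff]; linarith
    have he0 : 0 < Real.exp (-x) := Real.exp_pos _
    have hz : 0 ≤ Zfun μ α x ∧ Zfun μ α x ≤ 1 := Zfun_mem_Icc μ α x hμ
    rw [Real.norm_eq_abs, abs_mul, abs_of_pos he0, abs_of_nonneg hz.1]
    nlinarith [hz.2]
  have hint1 : IntegrableOn f (Set.Ioc 0 b) := by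
    apply Measure.integrableOn_of_bounded (by simp) hmeas.aestronglyMeasurable
    exact (ae_restrict_iff' measurableSet_Ioc).2 (ae_of_all _ hbound)
  have hint2 : IntegrableOn f (Set.Ioi b) :=
    (integrableOn_zero).congr_fun (fun x hx => (hIoi x hx).symm) measurableSet_Ioi
  -- split the integral
  have hsplit : (∫ x in Set.Ioi (0:ℝ), f x)
      = (∫ x in Set.Ioc (0:ℝ) b, f x) + ∫ x in Set.Ioi b, f x := by
    rw [← Set.Ioc_union_Ioi_eq_Ioi hb0]
    exact setIntegral_union (Set.Ioc_disjoint_Ioi le_rfl) measurableSet_Ioi hint1 hint2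
  have hI2 : (∫ x in Set.Ioi b, f x) = 0 := by
    rw [setIntegral_congr_fun measurableSet_Ioi hIoi, integral_zero]
  have hIoc : (∫ x in Set.Ioc (0:ℝ) b, f x) = ∫ x in (0:ℝ)..b, f x :=
    (intervalIntegral.integral_of_le hb0).symm
  -- split interval at a
  have hii1 : IntervalIntegrable f volume 0 a := by
    rw [intervalIntegrable_iff_integrableOn_Ioc_of_le ha0]
    exact hint1.mono_set (Set.Ioc_subset_Ioc le_rfl hab)
  have hii2 : IntervalIntegrable f volume a b := by
    rw [intervalIntegrable_iff_integrableOn_Ioc_of_le hab]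
    exact hint1.mono_set (Set.Ioc_subset_Ioc ha0 le_rfl)
  have hadd : (∫ x in (0:ℝ)..a, f x) + (∫ x in a..b, f x) = ∫ x in (0:ℝ)..b, f x :=
    intervalIntegral.integral_add_adjacent_intervals hii1 hii2
  -- piece 1
  have hP1 : (∫ x in (0:ℝ)..a, f x) = 1 - Real.exp (-a) := by
    have hcong : Set.EqOn f (fun x => Real.exp (-x)) (Set.uIcc 0 a) := by
      intro x hx
      rw [Set.uIcc_of_le ha0] at hx
      obtain ⟨_, hxa⟩ := hx
      have : Zfun μ α x = 1 := by
        unfold Zfun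
        split_ifs with h1 h2
        · rfl
        · push_neg at h1
          have hxa' : x = a := le_antisymm hxa h1
          rw [hxa', ha_def]
          nlinarith [hμc]
        · push_neg at h1 h2
          exfalso; linarith
      simp [hf_def, this]
    rw [intervalIntegral.integral_congr hcong]
    have hD : ∀ x ∈ Set.uIcc (0:ℝ) a, HasDerivAt (fun y => -Real.exp (-y)) (Real.exp (-x)) x := by
      intro x _
      have h := ((Real.hasDerivAt_exp (-x)).comp x (hasDerivAt_neg x)).neg
      exact h.congr_deriv (by ring)
    rw [intervalIntegral.integral_eq_sub_of_hasDerivAt hD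
      (Continuous.intervalIntegrable (Real.continuous_exp.comp continuous_neg) 0 a)]
    simp; ring
  -- piece 2
  have hP2 : (∫ x in a..b, f x)
      = Real.exp (-b) * (μ * (b - α + 1) - 1/2) - Real.exp (-a) * (μ * (a - α + 1) - 1/2) := by
    have hcong : Set.EqOn f (fun x => Real.exp (-x) * (1/2 - μ * (x - α))) (Set.uIcc a b) := by
      intro x hx
      rw [Set.uIcc_of_le hab] at hx
      obtain ⟨hxa, hxb⟩ := hx
      have : Zfun μ α x = 1/2 - μ * (x - α) := by
        unfold Zfun
        have h1 : ¬ (x < α - 1/(2*μ)) := by push_neg; exact hxa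
        have h2 : x ≤ α + 1/(2*μ) := hxb
        rw [if_neg h1, if_pos h2]
      simp [hf_def, this]
    rw [intervalIntegral.integral_congr hcong]
    have hD : ∀ x ∈ Set.uIcc a b,
        HasDerivAt (fun y => Real.exp (-y) * (μ * (y - α + 1) - 1/2))
          (Real.exp (-x) * (1/2 - μ * (x - α))) x := by
      intro x _
      have he : HasDerivAt (fun y => Real.exp (-y)) (-Real.exp (-x)) x := by
        have h := (Real.hasDerivAt_exp (-x)).comp x (hasDerivAt_neg x)
        exact h.congr_deriv (by ring)
      have hp : HasDerivAt (fun y : ℝ => μ * (y - α + 1) - 1/2) μ x := by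
        have h := ((((hasDerivAt_id x).sub_const α).add_const 1).const_mul μ).sub_const (1/2)
        exact h.congr_deriv (by ring)
      have h := he.mul hp
      have heq : (-Real.exp (-x)) * (μ * (x - α + 1) - 1/2) + Real.exp (-x) * μ
          = Real.exp (-x) * (1/2 - μ * (x - α)) := by ring
      exact heq ▸ h
    rw [intervalIntegral.integral_eq_sub_of_hasDerivAt hD
      (Continuous.intervalIntegrable ((Real.continuous_exp.comp continuous_neg).mul (by fun_prop)) a b)]
  -- combine
  have hmain : (∫ x in Set.Ioi (0:ℝ), f x)
      = 1 - μ * (Real.exp (-a) - Real.exp (-b)) := by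
    rw [hsplit, hI2, add_zero, hIoc, ← hadd, hP1, hP2]
    have hba : b - α = c := by rw [hb_def]; ring
    have haa : a - α = -c := by rw [ha_def]; ring
    rw [hba, haa]
    linear_combination (Real.exp (-b) + Real.exp (-a)) * hμc
  constructor
  · exact hmain
  · rw [hmain]
    have e1 : -α + 1/(2*μ) = -a := by rw [ha_def, hc_def]; ring
    have e2 : -α - 1/(2*μ) = -b := by rw [hb_def, hc_def]; ring
    rw [e1, e2]; ring
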